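/- If α + β·i is a complex number with (α + β·i)^n = 1, then the function g(t) = e^{αt} sin(βt) satisfies g^{(n)}(t) = g(t) for all real t. -/

import Mathlib

open Real Complex

lemma aux_hasDerivAt (z : ℂ) (t : ℝ) :
    HasDerivAt (fun s : ℝ => Complex.exp (z * s)) (z * Complex.exp (z * t)) t := by
  have h1 : HasDerivAt (fun w : ℂ => Complex.exp (z * w)) (z * Complex.exp (z * t)) (t : ℂ) := by
    have := ((Complex.hasDerivAt_exp (z * t)).comp (t : ℂ)
      ((hasDerivAt_id (t : ℂ)).const_mul z))
    exact this.congr_deriv (by ring)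
  exact h1.comp_ofReal

lemma aux_iter (z : ℂ) (n : ℕ) :
    iteratedDeriv n (fun t : ℝ => (Complex.exp (z * t)).im)
      = fun t : ℝ => (z ^ n * Complex.exp (z * t)).im := by
  induction n with
  | zero => simp
  | succ n ih =>
    rw [iteratedDeriv_succ, ih]
    funext t
    have h : HasDerivAt (fun s : ℝ => z ^ n * Complex.exp (z * s))
        (z ^ n * (z * Complex.exp (z * t))) t := (aux_hasDerivAt z t).const_mul _
    have h2 : HasDerivAt (fun s : ℝ => (z ^ n * Complex.exp (z * s)).im)
        ((z ^ n * (z * Complex.exp (z * t))).im) t :=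
      Complex.imCLM.hasFDerivAt.comp_hasDerivAt t h
    rw [h2.deriv, pow_succ]
    ring_nf

theorem exp_sin_satisfies_ode (n : ℕ) (hn : 2 ≤ n) (α β : ℝ)
    (h : ((α : ℂ) + (β : ℂ) * Complex.I) ^ n = 1) :
    ∀ t : ℝ, iteratedDeriv n (fun t : ℝ => Real.exp (α * t) * Real.sin (β * t)) t
      = Real.exp (α * t) * Real.sin (β * t) := by
  intro t
  set z : ℂ := (α : ℂ) + (β : ℂ) * Complex.I with hz
  have key : (fun t : ℝ => Real.exp (α * t) * Real.sin (β * t))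
      = fun t : ℝ => (Complex.exp (z * t)).im := by
    funext s
    rw [Complex.exp_im]
    congr 1 <;> simp [hz] <;> ring
  rw [key, aux_iter, h]
  simpa using (congrFun key t).symm
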